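/- Let F be a Schur stable real n×n matrix and F₁ : ℕ → ℝ^{n×n} a matrix-valued sequence for which there exist constants C ≥ 0 and ρ ∈ [0,1) with ‖F₁(t)‖ ≤ C·ρᵗ for all t ∈ ℕ. Then every sequence x : ℕ → ℝⁿ satisfying x(t+1) = F·x(t) + F₁(t)·x(t) for all t converges to 0 as t → ∞. -/

import Mathlib

open Matrix
open scoped Matrix.Norms.L2Operator
open scoped ENNReal NNReal

noncomputable section

lemma norm_complexify {n : ℕ} (v : Fin n → ℝ) :
    ‖(WithLp.equiv 2 (Fin n → ℂ)).symm (fun i => (v i : ℂ))‖ =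
      ‖(WithLp.equiv 2 (Fin n → ℝ)).symm v‖ := by
  rw [EuclideanSpace.norm_eq, EuclideanSpace.norm_eq]
  simp

lemma opNorm_le_complexify {n : ℕ} (A : Matrix (Fin n) (Fin n) ℝ) :
    ‖A‖ ≤ ‖A.map Complex.ofReal‖ := by
  rw [l2_opNorm_def]
  refine ContinuousLinearMap.opNorm_le_bound _ (norm_nonneg _) fun v => ?_
  set v' : Fin n → ℝ := (WithLp.equiv 2 (Fin n → ℝ)) v with hv'
  have h1 : (fun i => ((A *ᵥ v') i : ℂ))
      = (A.map Complex.ofReal) *ᵥ (fun i => (v' i : ℂ)) := by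
    funext i
    exact RingHom.map_mulVec Complex.ofRealHom A _ i
  have step1 : ‖(WithLp.equiv 2 (Fin n → ℝ)).symm (A *ᵥ v')‖
      ≤ ‖A.map Complex.ofReal‖ * ‖v‖ := by
    rw [← norm_complexify, h1]
    have h2 := l2_opNorm_mulVec (A.map Complex.ofReal)
      ((WithLp.equiv 2 (Fin n → ℂ)).symm (fun i => (v' i : ℂ)))
    have h3 : ‖(WithLp.equiv 2 (Fin n → ℂ)).symm (fun i => (v' i : ℂ))‖ = ‖v‖ := by
      rw [norm_complexify, hv']
      simp
    rw [h3] at h2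
    convert h2 using 3
    rfl
  exact step1

lemma pow_norm_le_geom {n : ℕ} (M : Matrix (Fin n) (Fin n) ℂ) {r : ℝ≥0}
    (hr : spectralRadius ℂ M < (r : ℝ≥0∞)) (hr1 : (r : ℝ) ≤ 1) :
    ∃ K : ℝ, 1 ≤ K ∧ ∀ t, ‖M ^ t‖ ≤ K * (r : ℝ) ^ t := by
  have hrpos : (0 : ℝ) < r := by
    rcases eq_or_lt_of_le (zero_le (a := r)) with h | h
    · exfalso; rw [← h] at hr; simp at hr
    · exact_mod_cast h
  have gel := spectrum.pow_nnnorm_pow_one_div_tendsto_nhds_spectralRadius M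
  have hev : ∀ᶠ t : ℕ in Filter.atTop, (‖M ^ t‖₊ : ℝ≥0∞) ^ (1 / (t : ℝ)) < (r : ℝ≥0∞) :=
    gel.eventually_lt_const hr
  obtain ⟨N, hN⟩ := Filter.eventually_atTop.mp (hev.and (Filter.eventually_ge_atTop 1))
  have key : ∀ t, N ≤ t → ‖M ^ t‖ ≤ (r : ℝ) ^ t := by
    intro t ht
    obtain ⟨h1, h2⟩ := hN t ht
    have ht0 : (t : ℝ) ≠ 0 := Nat.cast_ne_zero.mpr (by omega)
    have h3 : ((‖M ^ t‖₊ : ℝ≥0∞) ^ (1 / (t : ℝ))) ^ (t : ℝ) ≤ (r : ℝ≥0∞) ^ (t : ℝ) :=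
      ENNReal.rpow_le_rpow h1.le (Nat.cast_nonneg t)
    rw [← ENNReal.rpow_mul, one_div, inv_mul_cancel₀ ht0, ENNReal.rpow_one] at h3
    have h4 : (‖M ^ t‖₊ : ℝ≥0∞) ≤ ((r ^ t : ℝ≥0) : ℝ≥0∞) := by
      rwa [ENNReal.coe_pow, ← ENNReal.rpow_natCast (r : ℝ≥0∞) t]
    have h5 : ‖M ^ t‖₊ ≤ r ^ t := by exact_mod_cast h4
    calc ‖M ^ t‖ = (‖M ^ t‖₊ : ℝ) := rfl
      _ ≤ ((r ^ t : ℝ≥0) : ℝ) := by exact_mod_cast h5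
      _ = (r : ℝ) ^ t := by push_cast; ring
  set B : ℝ := (Finset.range (N + 1)).sup' Finset.nonempty_range_add_one (fun t => ‖M ^ t‖) with hB
  refine ⟨max 1 (B / (r : ℝ) ^ N), le_max_left _ _, fun t => ?_⟩
  have hrN : (0 : ℝ) < (r : ℝ) ^ N := pow_pos hrpos N
  rcases le_or_gt t N with h | h
  · have h1 : ‖M ^ t‖ ≤ B :=
      Finset.le_sup' (fun t => ‖M ^ t‖) (Finset.mem_range.mpr (Nat.lt_succ_of_le h))
    have h2 : (r : ℝ) ^ N ≤ (r : ℝ) ^ t := pow_le_pow_of_le_one hrpos.le hr1 h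
    calc ‖M ^ t‖ ≤ B := h1
      _ = (B / (r : ℝ) ^ N) * (r : ℝ) ^ N := by field_simp
      _ ≤ max 1 (B / (r : ℝ) ^ N) * (r : ℝ) ^ N := by
          apply mul_le_mul_of_nonneg_right (le_max_right _ _) hrN.le
      _ ≤ max 1 (B / (r : ℝ) ^ N) * (r : ℝ) ^ t := by
          apply mul_le_mul_of_nonneg_left h2 (le_trans zero_le_one (le_max_left _ _))
  · calc ‖M ^ t‖ ≤ (r : ℝ) ^ t := key t h.le
      _ ≤ max 1 (B / (r : ℝ) ^ N) * (r : ℝ) ^ t := by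
          nth_rewrite 1 [← one_mul ((r:ℝ) ^ t)]
          exact mul_le_mul_of_nonneg_right (le_max_left _ _) (pow_pos hrpos t).le

lemma prod_one_add_eq {c : ℕ → ℝ} : ∀ t, ∏ s ∈ Finset.range t, (1 + c s)
    = 1 + ∑ s ∈ Finset.range t, c s * ∏ u ∈ Finset.range s, (1 + c u) := by
  intro t
  induction t with
  | zero => simp
  | succ t ih => rw [Finset.prod_range_succ, Finset.sum_range_succ, ih]; ring

lemma gronwall_aux {b c : ℕ → ℝ} {A : ℝ} (hc : ∀ s, 0 ≤ c s)
    (h : ∀ t, b t ≤ A + ∑ s ∈ Finset.range t, c s * b s) :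
    ∀ t, b t ≤ A * ∏ s ∈ Finset.range t, (1 + c s) := by
  intro t
  induction t using Nat.strong_induction_on with
  | _ t ih =>
    calc b t ≤ A + ∑ s ∈ Finset.range t, c s * b s := h t
      _ ≤ A + ∑ s ∈ Finset.range t, c s * (A * ∏ u ∈ Finset.range s, (1 + c u)) := by
          gcongr with s hs
          · exact hc s
          · exact ih s (Finset.mem_range.mp hs)
      _ = A * ∏ s ∈ Finset.range t, (1 + c s) := by
          rw [prod_one_add_eq, mul_add, mul_one, Finset.mul_sum]
          congr 1
          exact Finset.sum_congr rfl fun s _ => by ring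

lemma prod_one_add_le_exp {c : ℕ → ℝ} (hc : ∀ s, 0 ≤ c s) (t : ℕ) :
    ∏ s ∈ Finset.range t, (1 + c s) ≤ Real.exp (∑ s ∈ Finset.range t, c s) := by
  calc ∏ s ∈ Finset.range t, (1 + c s) ≤ ∏ s ∈ Finset.range t, Real.exp (c s) :=
        Finset.prod_le_prod (fun s _ => by have := hc s; linarith)
          (fun s _ => by rw [add_comm]; exact Real.add_one_le_exp _)
    _ = Real.exp (∑ s ∈ Finset.range t, c s) := (Real.exp_sum _ _).symm

lemma voc {n : ℕ} (F : Matrix (Fin n) (Fin n) ℝ) (F₁ : ℕ → Matrix (Fin n) (Fin n) ℝ)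
    (x : ℕ → Fin n → ℝ)
    (hdyn : ∀ t : ℕ, x (t + 1) = F.mulVec (x t) + (F₁ t).mulVec (x t)) :
    ∀ t, x t = (F ^ t) *ᵥ x 0 +
      ∑ s ∈ Finset.range t, ((F ^ (t - 1 - s)) * F₁ s) *ᵥ x s := by
  intro t
  induction t with
  | zero => simp [Matrix.one_mulVec]
  | succ t ih =>
    rw [hdyn t]
    nth_rewrite 1 [ih]
    rw [Matrix.mulVec_add]
    have hsum := map_sum (Matrix.mulVecLin F)
      (fun s => ((F ^ (t - 1 - s)) * F₁ s) *ᵥ x s) (Finset.range t)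
    simp only [Matrix.mulVecLin_apply] at hsum
    rw [hsum, Finset.sum_range_succ]
    have h1 : F *ᵥ ((F ^ t) *ᵥ x 0) = (F ^ (t + 1)) *ᵥ x 0 := by
      rw [Matrix.mulVec_mulVec, ← pow_succ']
    have h2 : ∀ s ∈ Finset.range t, F *ᵥ (((F ^ (t - 1 - s)) * F₁ s) *ᵥ x s)
        = ((F ^ (t + 1 - 1 - s)) * F₁ s) *ᵥ x s := by
      intro s hs
      have hst : s < t := Finset.mem_range.mp hs
      have he : t + 1 - 1 - s = (t - 1 - s) + 1 := by omega
      rw [Matrix.mulVec_mulVec, ← mul_assoc, ← pow_succ', he]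
    rw [Finset.sum_congr rfl h2]
    have h3 : ((F ^ (t + 1 - 1 - t)) * F₁ t) *ᵥ x t = (F₁ t) *ᵥ x t := by
      simp
    rw [h3, h1]
    abel

/-- A complex square matrix is Schur stable if every eigenvalue has modulus `< 1`. -/
def SchurStable {m : Type*} [Fintype m] [DecidableEq m] (M : Matrix m m ℂ) : Prop :=
  ∀ μ ∈ spectrum ℂ M, ‖μ‖ < 1

/-- A real square matrix is Schur stable if every complex eigenvalue has modulus `< 1`. -/
def SchurStableR {m : Type*} [Fintype m] [DecidableEq m] (M : Matrix m m ℝ) : Prop :=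
  SchurStable (M.map Complex.ofReal)

/-- Lemma 3 of the paper: a Schur stable linear system perturbed by an
exponentially vanishing time-varying term still drives the state to zero.  Here `‖·‖` is
the L2 operator norm on matrices. -/
theorem schur_stable_plus_vanishing_perturbation {n : ℕ}
    (F : Matrix (Fin n) (Fin n) ℝ) (hF : SchurStableR F)
    (F₁ : ℕ → Matrix (Fin n) (Fin n) ℝ)
    (C ρ : ℝ) (hC : 0 ≤ C) (hρ0 : 0 ≤ ρ) (hρ1 : ρ < 1)
    (hbound : ∀ t : ℕ, ‖F₁ t‖ ≤ C * ρ ^ t)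
    (x : ℕ → Fin n → ℝ)
    (hdyn : ∀ t : ℕ, x (t + 1) = F.mulVec (x t) + (F₁ t).mulVec (x t)) :
    Filter.Tendsto x Filter.atTop (nhds 0) := by
  rcases Nat.eq_zero_or_pos n with hn | hn
  · subst hn
    have hx0 : x = fun _ => 0 := funext fun t => Subsingleton.elim _ _
    rw [hx0]
    exact tendsto_const_nhds
  -- nontrivial case
  haveI : Nonempty (Fin n) := ⟨⟨0, hn⟩⟩
  set M : Matrix (Fin n) (Fin n) ℂ := F.map Complex.ofReal with hM
  obtain ⟨z, hzmem, hzr⟩ := spectrum.exists_nnnorm_eq_spectralRadius (a := M)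
  have hz1 : ‖z‖ < 1 := hF z hzmem
  set r : ℝ := max ((‖z‖ + 1) / 2) (max ρ (1 / 2)) with hrdef
  have hr0 : (0 : ℝ) < r := lt_of_lt_of_le (by norm_num) ((le_max_right _ _).trans (le_max_right _ _))
  have hr1 : r < 1 := by
    have h1 : (‖z‖ + 1) / 2 < 1 := by linarith
    have h2 : max ρ (1 / 2) < 1 := max_lt hρ1 (by norm_num)
    exact max_lt h1 h2
  have hρr : ρ ≤ r := (le_max_left _ _).trans (le_max_right _ _)
  have hzr' : ‖z‖ < r := lt_of_lt_of_le (by linarith) (le_max_left _ _)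
  have hsr : spectralRadius ℂ M < (r.toNNReal : ENNReal) := by
    rw [← hzr]
    exact_mod_cast (by rwa [← NNReal.coe_lt_coe, coe_nnnorm, Real.coe_toNNReal _ hr0.le] :
      ‖z‖₊ < r.toNNReal)
  have hrcoe : ((r.toNNReal : ℝ≥0) : ℝ) = r := Real.coe_toNNReal _ hr0.le
  obtain ⟨K, hK1, hK⟩ := pow_norm_le_geom M hsr (by rw [hrcoe]; exact hr1.le)
  rw [hrcoe] at hK
  have hK0 : (0 : ℝ) ≤ K := zero_le_one.trans hK1
  -- real power bound
  have hFt : ∀ t, ‖F ^ t‖ ≤ K * r ^ t := by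
    intro t
    refine (opNorm_le_complexify (F ^ t)).trans ?_
    have hmap : (F ^ t).map Complex.ofReal = M ^ t := by
      rw [hM]
      have := map_pow (Complex.ofRealHom.mapMatrix (m := Fin n)) F t
      simp only [RingHom.mapMatrix_apply] at this
      rw [show ⇑Complex.ofRealHom = Complex.ofReal from rfl] at this
      exact this
    rw [hmap]
    exact hK t
  -- Euclidean picture
  set P := PiLp.continuousLinearEquiv 2 ℝ (fun _ : Fin n => ℝ) with hP
  set y : ℕ → EuclideanSpace ℝ (Fin n) := fun t => P.symm (x t) with hy
  set u : ℕ → ℝ := fun t => ‖y t‖ with hu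
  have hmv : ∀ (A : Matrix (Fin n) (Fin n) ℝ) (t : ℕ), ‖P.symm (A *ᵥ x t)‖ ≤ ‖A‖ * u t := by
    intro A t
    exact l2_opNorm_mulVec A (y t)
  -- norm recursion
  have hnormbound : ∀ t, u t ≤ K * u 0 * r ^ t
      + ∑ s ∈ Finset.range t, (K * C * ρ ^ s) * (r ^ (t - 1 - s) * u s) := by
    intro t
    have hv := voc F F₁ x hdyn t
    have : y t = P.symm ((F ^ t) *ᵥ x 0)
        + ∑ s ∈ Finset.range t, P.symm (((F ^ (t - 1 - s)) * F₁ s) *ᵥ x s) := by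
      rw [hy]
      simp only []
      rw [hv, map_add, map_sum]
    calc u t = ‖P.symm ((F ^ t) *ᵥ x 0)
        + ∑ s ∈ Finset.range t, P.symm (((F ^ (t - 1 - s)) * F₁ s) *ᵥ x s)‖ := by
          rw [hu]; simp only []; rw [this]
      _ ≤ ‖P.symm ((F ^ t) *ᵥ x 0)‖
          + ∑ s ∈ Finset.range t, ‖P.symm (((F ^ (t - 1 - s)) * F₁ s) *ᵥ x s)‖ :=
          (norm_add_le _ _).trans (by gcongr; exact norm_sum_le _ _)
      _ ≤ K * u 0 * r ^ t
          + ∑ s ∈ Finset.range t, (K * C * ρ ^ s) * (r ^ (t - 1 - s) * u s) := by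
          gcongr with s hs
          · calc ‖P.symm ((F ^ t) *ᵥ x 0)‖ ≤ ‖F ^ t‖ * u 0 := hmv _ 0
              _ ≤ (K * r ^ t) * u 0 := by
                  apply mul_le_mul_of_nonneg_right (hFt t) (norm_nonneg _)
              _ = K * u 0 * r ^ t := by ring
          · calc ‖P.symm (((F ^ (t - 1 - s)) * F₁ s) *ᵥ x s)‖
                ≤ ‖(F ^ (t - 1 - s)) * F₁ s‖ * u s := hmv _ s
              _ ≤ (‖F ^ (t - 1 - s)‖ * ‖F₁ s‖) * u s := by
                  apply mul_le_mul_of_nonneg_right (norm_mul_le _ _) (norm_nonneg _)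
              _ ≤ ((K * r ^ (t - 1 - s)) * (C * ρ ^ s)) * u s := by
                  apply mul_le_mul_of_nonneg_right _ (norm_nonneg _)
                  exact mul_le_mul (hFt _) (hbound s) (norm_nonneg _)
                    (by positivity)
              _ = (K * C * ρ ^ s) * (r ^ (t - 1 - s) * u s) := by ring
  -- Gronwall setup
  set b : ℕ → ℝ := fun t => u t / r ^ t with hb
  set c : ℕ → ℝ := fun s => (K * C / r) * ρ ^ s with hc
  have hcpos : ∀ s, 0 ≤ c s := fun s => by
    rw [hc]; positivity
  have hbrec : ∀ t, b t ≤ K * u 0 + ∑ s ∈ Finset.range t, c s * b s := by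
    intro t
    have hterm : ∀ s ∈ Finset.range t,
        (K * C * ρ ^ s) * (r ^ (t - 1 - s) * u s) = c s * b s * r ^ t := by
      intro s hs
      have hst : s < t := Finset.mem_range.mp hs
      have hre : r ^ t = r ^ (t - 1 - s) * r ^ s * r := by
        calc r ^ t = r ^ ((t - 1 - s) + s + 1) := by congr 1; omega
          _ = r ^ (t - 1 - s) * r ^ s * r := by rw [pow_add, pow_add, pow_one]
      have hrs : (r:ℝ) ^ s ≠ 0 := (pow_pos hr0 s).ne'
      simp only [hc, hb, hre]
      field_simp
    have : b t * r ^ t ≤ (K * u 0 + ∑ s ∈ Finset.range t, c s * b s) * r ^ t := by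
      have hbt : b t * r ^ t = u t := by
        simp only [hb]; field_simp
      rw [hbt, add_mul, Finset.sum_mul]
      refine (hnormbound t).trans (le_of_eq ?_)
      congr 1
      exact Finset.sum_congr rfl hterm
    exact le_of_mul_le_mul_right this (pow_pos hr0 t)
  have hgron := gronwall_aux hcpos hbrec
  -- uniform bound on products
  have hcsum : ∀ t, ∑ s ∈ Finset.range t, c s ≤ (K * C / r) * (1 - ρ)⁻¹ := by
    intro t
    simp only [hc]
    rw [← Finset.mul_sum]
    apply mul_le_mul_of_nonneg_left _ (by positivity)
    exact ((summable_geometric_of_lt_one hρ0 hρ1).sum_le_tsum (Finset.range t)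
      (fun i _ => pow_nonneg hρ0 i)).trans (tsum_geometric_of_lt_one hρ0 hρ1).le
  set Kf : ℝ := K * u 0 * Real.exp ((K * C / r) * (1 - ρ)⁻¹) with hKf
  have hub : ∀ t, u t ≤ Kf * r ^ t := by
    intro t
    have h1 : b t ≤ Kf := by
      refine (hgron t).trans ?_
      rw [hKf]
      apply mul_le_mul_of_nonneg_left _ (by positivity)
      exact (prod_one_add_le_exp hcpos t).trans (Real.exp_le_exp.mpr (hcsum t))
    have : u t = b t * r ^ t := by
      rw [hb]
      field_simp
    rw [this]
    exact mul_le_mul_of_nonneg_right h1 (pow_pos hr0 t).le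
  -- convergence
  have hulim : Filter.Tendsto u Filter.atTop (nhds 0) := by
    apply squeeze_zero (fun t => norm_nonneg _) hub
    simpa using (tendsto_pow_atTop_nhds_zero_of_lt_one hr0.le hr1).const_mul Kf
  have hylim : Filter.Tendsto y Filter.atTop (nhds 0) :=
    tendsto_zero_iff_norm_tendsto_zero.mpr hulim
  have hfin : Filter.Tendsto (fun t => P (y t)) Filter.atTop (nhds (P 0)) :=
    (P.continuous.tendsto 0).comp hylim
  rw [map_zero] at hfin
  have hxy : x = fun t => P (y t) := funext fun t => (P.apply_symm_apply (x t)).symm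
  rw [hxy]
  exact hfin
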